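/- With R, S rings, A, B unital subrings of R, X : B → A an invertible submodule, M, N, P R-S-bimodules, f in Hom_{B,S}(BM,BN) and g in Hom_{B,S}(BN,BP): the induced maps satisfy (g ∘ f)^X = g^X ∘ f^X, and id^X = id, and the assignment f ↦ f^X is additive. -/

import Mathlib

open Pointwise

/-- `A` is a unital subring of the (possibly non-unital) ring `R`, with identity element
`oneA` (not necessarily an identity of `R`). -/
structure IsUnitalSubring {R : Type*} [NonUnitalRing R] (A : AddSubgroup R) (oneA : R) : Prop where
  one_mem : oneA ∈ A
  mul_mem : ∀ ⦃a⦄, a ∈ A → ∀ ⦃b⦄, b ∈ A → a * b ∈ A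
  one_mul : ∀ a ∈ A, oneA * a = a
  mul_one : ∀ a ∈ A, a * oneA = a

/-- `X` is an invertible (unital) `A`-`B`-submodule of `R` with inverse `Xinv`:
`X Xinv = A` and `Xinv X = B`, where products denote the additive subgroup generated by
all products (i.e. finite sums of products). -/
structure IsInvertibleSubmodule {R : Type*} [NonUnitalRing R]
    (A B : AddSubgroup R) (oneA oneB : R) (X Xinv : AddSubgroup R) : Prop where
  unitalA : IsUnitalSubring A oneA
  unitalB : IsUnitalSubring B oneB
  smul_mem : ∀ ⦃a⦄, a ∈ A → ∀ ⦃x⦄, x ∈ X → a * x ∈ X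
  mem_smul : ∀ ⦃x⦄, x ∈ X → ∀ ⦃b⦄, b ∈ B → x * b ∈ X
  one_smul : ∀ x ∈ X, oneA * x = x
  smul_one : ∀ x ∈ X, x * oneB = x
  smul_mem' : ∀ ⦃b⦄, b ∈ B → ∀ ⦃y⦄, y ∈ Xinv → b * y ∈ Xinv
  mem_smul' : ∀ ⦃y⦄, y ∈ Xinv → ∀ ⦃a⦄, a ∈ A → y * a ∈ Xinv
  one_smul' : ∀ y ∈ Xinv, oneB * y = y
  smul_one' : ∀ y ∈ Xinv, y * oneA = y
  mul_inv : X * Xinv = A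
  inv_mul : Xinv * X = B

/-- The ring structure on a unital subring of `R`. -/
def IsUnitalSubring.ring {R : Type*} [NonUnitalRing R] {A : AddSubgroup R} {oneA : R}
    (h : IsUnitalSubring A oneA) : Ring A :=
  { (inferInstance : AddCommGroup A) with
    mul := fun a b => ⟨a.1 * b.1, h.mul_mem a.2 b.2⟩
    one := ⟨oneA, h.one_mem⟩
    mul_assoc := fun a b c => Subtype.ext (mul_assoc a.1 b.1 c.1)
    one_mul := fun a => Subtype.ext (h.one_mul a.1 a.2)
    mul_one := fun a => Subtype.ext (h.mul_one a.1 a.2)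
    left_distrib := fun a b c => Subtype.ext (mul_add a.1 b.1 c.1)
    right_distrib := fun a b c => Subtype.ext (add_mul a.1 b.1 c.1)
    zero_mul := fun a => Subtype.ext (zero_mul a.1)
    mul_zero := fun a => Subtype.ext (mul_zero a.1) }


/-- `M` is an `R`-`S`-bimodule via the left action `ρ` and the right action `τ`. -/
structure IsBimodule (R S M : Type*) [NonUnitalRing R] [NonUnitalRing S] [AddCommGroup M]
    (ρ : R → M → M) (τ : M → S → M) : Prop where
  add_smul : ∀ r r' m, ρ (r + r') m = ρ r m + ρ r' m
  smul_add : ∀ r m m', ρ r (m + m') = ρ r m + ρ r m'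
  mul_smul : ∀ r r' m, ρ (r * r') m = ρ r (ρ r' m)
  smul_add' : ∀ m m' s, τ (m + m') s = τ m s + τ m' s
  add_smul' : ∀ m s s', τ m (s + s') = τ m s + τ m s'
  smul_mul' : ∀ m s s', τ m (s * s') = τ (τ m s) s'
  smul_comm : ∀ r m s, τ (ρ r m) s = ρ r (τ m s)

/-- For a subring `A` of `R`, the sub-bimodule `AM` of `M`: the additive subgroup generated
by all products `a • m` with `a ∈ A`, `m ∈ M`. -/
def actSpan {R M : Type*} [NonUnitalRing R] [AddCommGroup M]
    (ρ : R → M → M) (A : AddSubgroup R) : AddSubgroup M :=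
  AddSubgroup.closure {x | ∃ a ∈ A, ∃ m : M, x = ρ a m}

/-- `f` belongs to `Hom_{B,S}(BM, BN)`: it maps `BM` to `BN` and is left `B`-linear and
right `S`-linear there. -/
def IsHomBS {R S M N : Type*} [NonUnitalRing R] [NonUnitalRing S]
    [AddCommGroup M] [AddCommGroup N]
    (B : AddSubgroup R) (ρM : R → M → M) (τM : M → S → M)
    (ρN : R → N → N) (τN : N → S → N) (f : M → N) : Prop :=
  (∀ m ∈ actSpan ρM B, f m ∈ actSpan ρN B) ∧
  (∀ m ∈ actSpan ρM B, ∀ m' ∈ actSpan ρM B, f (m + m') = f m + f m') ∧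
  (∀ b ∈ B, ∀ m ∈ actSpan ρM B, f (ρM b m) = ρN b (f m)) ∧
  (∀ m ∈ actSpan ρM B, ∀ s : S, f (τM m s) = τN (f m) s)

/-- `g` is the map `f^X ∈ Hom_{A,S}(AM, AN)` induced by `f ∈ Hom_{B,S}(BM, BN)` along the
invertible `A`-`B`-submodule `X`, i.e. it is left `A`-linear and right `S`-linear on `AM` and
satisfies `g (x • m) = x • f (1_B • m)` for all `x ∈ X`, `m ∈ M`. -/
def IsInducedMap {R S M N : Type*} [NonUnitalRing R] [NonUnitalRing S]
    [AddCommGroup M] [AddCommGroup N]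
    (A : AddSubgroup R) (oneB : R) (X : AddSubgroup R)
    (ρM : R → M → M) (τM : M → S → M)
    (ρN : R → N → N) (τN : N → S → N) (f g : M → N) : Prop :=
  (∀ m ∈ actSpan ρM A, g m ∈ actSpan ρN A) ∧
  (∀ m ∈ actSpan ρM A, ∀ m' ∈ actSpan ρM A, g (m + m') = g m + g m') ∧
  (∀ a ∈ A, ∀ m ∈ actSpan ρM A, g (ρM a m) = ρN a (g m)) ∧
  (∀ m ∈ actSpan ρM A, ∀ s : S, g (τM m s) = τN (g m) s) ∧
  (∀ x ∈ X, ∀ m : M, g (ρM x m) = ρN x (f (ρM oneB m)))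


section MyAux

variable {R S M N : Type*} [NonUnitalRing R] [NonUnitalRing S]
  [AddCommGroup M] [AddCommGroup N]

private lemma mem_actSpan_of_act {ρ : R → M → M} {A : AddSubgroup R}
    {a : R} (ha : a ∈ A) (m : M) : ρ a m ∈ actSpan ρ A :=
  AddSubgroup.subset_closure ⟨a, ha, m, rfl⟩

private lemma map_zero_of_addOn {ρ : R → M → M} {A : AddSubgroup R} {g : M → N}
    (hadd : ∀ m ∈ actSpan ρ A, ∀ m' ∈ actSpan ρ A, g (m + m') = g m + g m') :
    g 0 = 0 := by
  have h0 : (0 : M) ∈ actSpan ρ A := (actSpan ρ A).zero_mem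
  have := hadd 0 h0 0 h0
  rw [add_zero] at this
  exact right_eq_add.mp this

/-- `oneB` acts as the identity on `actSpan ρ B`. -/
private lemma one_act_on_span {ρ : R → M → M} {τ : M → S → M}
    (hM : IsBimodule R S M ρ τ) {B : AddSubgroup R} {oneB : R}
    (hB : IsUnitalSubring B oneB) :
    ∀ m ∈ actSpan ρ B, ρ oneB m = m := by
  have ρ0 : ρ oneB (0 : M) = 0 := by
    have := hM.smul_add oneB 0 0
    rw [add_zero] at this
    exact right_eq_add.mp this
  intro m hm
  induction hm using AddSubgroup.closure_induction with
  | mem x hx =>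
    obtain ⟨b, hb, m', rfl⟩ := hx
    rw [← hM.mul_smul, hB.one_mul b hb]
  | zero => exact ρ0
  | add x y _ _ ihx ihy => rw [hM.smul_add, ihx, ihy]
  | neg x _ ihx =>
    have : ρ oneB (x + -x) = ρ oneB x + ρ oneB (-x) := hM.smul_add _ _ _
    rw [add_neg_cancel, ρ0] at this
    rw [eq_neg_of_add_eq_zero_right this.symm, ihx]

/-- Uniqueness: two maps additive on `AM` that agree on all `ρM x m` with `x ∈ X`
agree on `AM`, since `A = X * Xinv`. -/
private lemma eqOn_of_agree_on_X
    {A B : AddSubgroup R} {oneA oneB : R} {X Xinv : AddSubgroup R}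
    (hX : IsInvertibleSubmodule A B oneA oneB X Xinv)
    {ρM : R → M → M} {τM : M → S → M} (hM : IsBimodule R S M ρM τM)
    {g g' : M → N}
    (hgadd : ∀ m ∈ actSpan ρM A, ∀ m' ∈ actSpan ρM A, g (m + m') = g m + g m')
    (hg'add : ∀ m ∈ actSpan ρM A, ∀ m' ∈ actSpan ρM A, g' (m + m') = g' m + g' m')
    (hagree : ∀ x ∈ X, ∀ m : M, g (ρM x m) = g' (ρM x m)) :
    Set.EqOn g g' (actSpan ρM A) := by
  have g0 : g 0 = 0 := map_zero_of_addOn hgadd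
  have g'0 : g' 0 = 0 := map_zero_of_addOn hg'add
  have gneg : ∀ (h : M → N),
      (∀ m ∈ actSpan ρM A, ∀ m' ∈ actSpan ρM A, h (m + m') = h m + h m') → h 0 = 0 →
      ∀ m ∈ actSpan ρM A, h (-m) = - h m := by
    intro h hadd h0 m hm
    have := hadd m hm (-m) ((actSpan ρM A).neg_mem hm)
    rw [add_neg_cancel, h0] at this
    exact eq_neg_of_add_eq_zero_right this.symm
  -- agreement on generators `ρM a m`, `a ∈ A`
  have hgen : ∀ a ∈ A, ∀ m : M, g (ρM a m) = g' (ρM a m) := by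
    intro a ha
    rw [← hX.mul_inv] at ha
    refine (AddSubmonoid.mul_induction_on (M := X.toAddSubmonoid)
      (N := Xinv.toAddSubmonoid) (C := fun a => a ∈ A ∧ ∀ m : M, g (ρM a m) = g' (ρM a m))
      ha ?_ ?_).2
    · intro x hx y hy
      refine ⟨hX.mul_inv ▸ AddSubmonoid.mul_mem_mul hx hy, fun m => ?_⟩
      rw [hM.mul_smul]
      exact hagree x hx (ρM y m)
    · rintro u v ⟨huA, hu⟩ ⟨hvA, hv⟩
      refine ⟨A.add_mem huA hvA, fun m => ?_⟩
      rw [hM.add_smul,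
        hgadd _ (mem_actSpan_of_act huA m) _ (mem_actSpan_of_act hvA m),
        hg'add _ (mem_actSpan_of_act huA m) _ (mem_actSpan_of_act hvA m), hu, hv]
  intro m hm
  induction hm using AddSubgroup.closure_induction with
  | mem x hx =>
    obtain ⟨a, ha, m', rfl⟩ := hx
    exact hgen a ha m'
  | zero => rw [g0, g'0]
  | add x y hx hy ihx ihy =>
    rw [hgadd x hx y hy, hg'add x hx y hy, ihx, ihy]
  | neg x hx ihx =>
    rw [gneg g hgadd g0 x hx, gneg g' hg'add g'0 x hx, ihx]

end MyAux

/-- The Miyashita induced-map assignment `f ↦ f^X` is compatible with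
composition, identities and addition: `(g ∘ f)^X = g^X ∘ f^X`, `id^X = id`, and
`(f + f')^X = f^X + f'^X`, as maps on `AM`. -/
theorem inducedMap_comp_id_add {R S M N P : Type*} [NonUnitalRing R] [NonUnitalRing S]
    [AddCommGroup M] [AddCommGroup N] [AddCommGroup P]
    (A B : AddSubgroup R) (oneA oneB : R) (X Xinv : AddSubgroup R)
    (hX : IsInvertibleSubmodule A B oneA oneB X Xinv)
    (ρM : R → M → M) (τM : M → S → M) (ρN : R → N → N) (τN : N → S → N)
    (ρP : R → P → P) (τP : P → S → P)
    (hM : IsBimodule R S M ρM τM) (hN : IsBimodule R S N ρN τN)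
    (hP : IsBimodule R S P ρP τP) :
    -- `(g ∘ f)^X = g^X ∘ f^X`
    (∀ (f : M → N) (g : N → P),
      IsHomBS B ρM τM ρN τN f → IsHomBS B ρN τN ρP τP g →
      ∀ (F : M → N) (G : N → P) (H : M → P),
        IsInducedMap A oneB X ρM τM ρN τN f F →
        IsInducedMap A oneB X ρN τN ρP τP g G →
        IsInducedMap A oneB X ρM τM ρP τP (g ∘ f) H →
        Set.EqOn H (G ∘ F) (actSpan ρM A)) ∧
    -- `id^X = id`
    (∀ I : M → M, IsInducedMap A oneB X ρM τM ρM τM id I →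
      Set.EqOn I id (actSpan ρM A)) ∧
    -- `(f + f')^X = f^X + f'^X`
    (∀ f f' : M → N,
      IsHomBS B ρM τM ρN τN f → IsHomBS B ρM τM ρN τN f' →
      ∀ F F' F'' : M → N,
        IsInducedMap A oneB X ρM τM ρN τN f F →
        IsInducedMap A oneB X ρM τM ρN τN f' F' →
        IsInducedMap A oneB X ρM τM ρN τN (fun m => f m + f' m) F'' →
        Set.EqOn F'' (fun m => F m + F' m) (actSpan ρM A)) := by
  have hA := hX.unitalA
  have hB := hX.unitalB
  refine ⟨?_, ?_, ?_⟩
  · -- composition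
    intro f g hf hg F G H hF hG hH
    refine eqOn_of_agree_on_X hX hM hH.2.1 ?_ ?_
    · -- G ∘ F is additive on AM
      intro m hm m' hm'
      simp only [Function.comp_apply]
      rw [hF.2.1 m hm m' hm', hG.2.1 _ (hF.1 m hm) _ (hF.1 m' hm')]
    · -- agreement on ρM x m
      intro x hx m
      have h1 : H (ρM x m) = ρP x (g (f (ρM oneB m))) := hH.2.2.2.2 x hx m
      have h2 : F (ρM x m) = ρN x (f (ρM oneB m)) := hF.2.2.2.2 x hx m
      have hfm : f (ρM oneB m) ∈ actSpan ρN B :=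
        hf.1 _ (mem_actSpan_of_act hB.one_mem m)
      have h3 : G (ρN x (f (ρM oneB m))) = ρP x (g (ρN oneB (f (ρM oneB m)))) :=
        hG.2.2.2.2 x hx _
      rw [h1, Function.comp_apply, h2, h3, one_act_on_span hN hB _ hfm]
  · -- identity
    intro I hI
    refine eqOn_of_agree_on_X hX hM hI.2.1 ?_ ?_
    · intro m hm m' hm'; rfl
    · intro x hx m
      have h1 : I (ρM x m) = ρM x (ρM oneB m) := hI.2.2.2.2 x hx m
      rw [h1, ← hM.mul_smul, hX.smul_one x hx]
      rfl
  · -- addition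
    intro f f' hf hf' F F' F'' hF hF' hF''
    refine eqOn_of_agree_on_X hX hM hF''.2.1 ?_ ?_
    · intro m hm m' hm'

      rw [hF.2.1 m hm m' hm', hF'.2.1 m hm m' hm']
      abel
    · intro x hx m
      have h1 : F'' (ρM x m) = ρN x (f (ρM oneB m) + f' (ρM oneB m)) :=
        hF''.2.2.2.2 x hx m
      rw [h1, hN.smul_add]

      rw [hF.2.2.2.2 x hx m, hF'.2.2.2.2 x hx m]
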